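/- Let N be a positive integer with N ≡ 3 (mod 8). Then the number of positive divisors of N that are congruent to 5 modulo 8 equals the number of positive divisors of N that are congruent to 7 modulo 8. -/

import Mathlib

lemma aux_mod (N d a b : ℕ) (hd : d ∣ N) (hN : 0 < N) (h : N % 8 = 3)
    (ha : d % 8 = a) (hab : ∀ m < 8, (a * m) % 8 = 3 → m = b) : (N / d) % 8 = b := by
  have he : d * (N / d) = N := Nat.mul_div_cancel' hd
  have hm : (a * ((N / d) % 8)) % 8 = 3 := by
    calc (a * ((N / d) % 8)) % 8 = (d % 8 * ((N / d) % 8)) % 8 := by rw [ha]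
    _ = (d * (N / d)) % 8 := (Nat.mul_mod d (N/d) 8).symm
    _ = 3 := by rw [he, h]
  exact hab _ (Nat.mod_lt _ (by norm_num)) hm

theorem card_divisors_five_mod_eight_eq_card_divisors_seven_mod_eight
    (N : ℕ) (hN : 0 < N) (h : N % 8 = 3) :
    (N.divisors.filter fun d => d % 8 = 5).card =
      (N.divisors.filter fun d => d % 8 = 7).card := by
  apply Finset.card_nbij' (fun d => N / d) (fun d => N / d)
  · intro d hd
    simp only [Finset.mem_coe, Finset.mem_filter, Nat.mem_divisors] at hd ⊢
    obtain ⟨⟨hdvd, hne⟩, h5⟩ := hd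
    exact ⟨⟨Nat.div_dvd_of_dvd hdvd, hne⟩, aux_mod N d 5 7 hdvd hN h h5 (by decide)⟩
  · intro d hd
    simp only [Finset.mem_coe, Finset.mem_filter, Nat.mem_divisors] at hd ⊢
    obtain ⟨⟨hdvd, hne⟩, h7⟩ := hd
    exact ⟨⟨Nat.div_dvd_of_dvd hdvd, hne⟩, aux_mod N d 7 5 hdvd hN h h7 (by decide)⟩
  · intro d hd
    simp only [Finset.mem_coe, Finset.mem_filter, Nat.mem_divisors] at hd
    exact Nat.div_div_self hd.1.1 hd.1.2
  · intro d hd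
    simp only [Finset.mem_coe, Finset.mem_filter, Nat.mem_divisors] at hd
    exact Nat.div_div_self hd.1.1 hd.1.2
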